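/- Let x̄₀ ∈ (0,1) satisfy φ(x̄₀) = x̄₀, let N ≥ 2, and let J be the N×N complex circulant matrix with every diagonal entry g(x̄₀)f′(x̄₀) − 1, entries g′(x̄₀)f(x̄₀)/2 at positions (j, j±1 mod N), and zeros elsewhere. Then for each s ∈ {0,…,N−1} the vector v_s with components v_s(j) = exp(2πi·s·j/N) satisfies J·v_s = λ_s·v_s with λ_s = g′(x̄₀)f(x̄₀)·cos(2πs/N) + g(x̄₀)f′(x̄₀) − 1. Moreover, if N is even, J has a positive real eigenvalue if and only if f(x̄₀)g′(x̄₀) − f′(x̄₀)g(x̄₀) < −1. -/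

import Mathlib

/-- The Hill-type function `f(x) = 1/(a + x^k)` of the reduced Hes1–Notch model. -/
noncomputable def fHill (a : ℝ) (k : ℕ) : ℝ → ℝ := fun x => 1 / (a + x ^ k)

/-- The Hill-type function `g(x) = 1/(1 + b·x^h)` of the reduced Hes1–Notch model. -/
noncomputable def gHill (b : ℝ) (h : ℕ) : ℝ → ℝ := fun x => 1 / (1 + b * x ^ h)

/-- The `N×N` circulant Jacobian of the reduced Hes1–Notch model on a one-dimensional
periodic lattice: diagonal entries `d`, entries `o` at the neighbour positions
`(j, j±1 mod N)`, zeros elsewhere. -/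
noncomputable def circJ (N : ℕ) (d o : ℂ) : Matrix (ZMod N) (ZMod N) ℂ :=
  Matrix.of fun i j =>
    (if j = i then d else 0) + (if j = i + 1 then o else 0) + (if j = i - 1 then o else 0)

open Matrix Polynomial Complex in
lemma myIsRoot_charpoly_iff {n : Type*} [DecidableEq n] [Fintype n]
    (M : Matrix n n ℂ) (t : ℂ) :
    M.charpoly.IsRoot t ↔ ∃ v, v ≠ 0 ∧ M.mulVec v = t • v := by
  have hev : Polynomial.eval t M.charpoly = (t • (1 : Matrix n n ℂ) - M).det := by
    rw [Matrix.charpoly, ← Polynomial.coe_evalRingHom, RingHom.map_det]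
    congr 1
    ext i j
    by_cases hij : i = j <;>
      simp [hij, Matrix.charmatrix_apply, Matrix.diagonal_apply, Matrix.one_apply,
        Matrix.smul_apply]
  rw [Polynomial.IsRoot, hev, ← Matrix.exists_mulVec_eq_zero_iff]
  constructor
  · rintro ⟨v, hv, h⟩
    refine ⟨v, hv, ?_⟩
    rw [Matrix.sub_mulVec, Matrix.smul_mulVec, Matrix.one_mulVec, sub_eq_zero] at h
    exact h.symm
  · rintro ⟨v, hv, h⟩
    refine ⟨v, hv, ?_⟩
    rw [Matrix.sub_mulVec, Matrix.smul_mulVec, Matrix.one_mulVec, h, sub_self]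

lemma circJ_mulVec (N : ℕ) [NeZero N] (d o : ℂ) (w : ZMod N → ℂ) (i : ZMod N) :
    (circJ N d o).mulVec w i = d * w i + o * w (i + 1) + o * w (i - 1) := by
  simp [circJ, Matrix.mulVec, dotProduct, add_mul, Finset.sum_add_distrib,
    ite_mul, Finset.sum_ite_eq']

open Complex in
lemma fourier_neighbor (N : ℕ) [NeZero N] (hN : 2 ≤ N) (s : ℕ) (i : ZMod N) :
    Complex.exp (2 * Real.pi * Complex.I * s * (i + 1).val / N)
      + Complex.exp (2 * Real.pi * Complex.I * s * (i - 1).val / N)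
    = 2 * (Real.cos (2 * Real.pi * s / N) : ℂ)
        * Complex.exp (2 * Real.pi * Complex.I * s * i.val / N) := by
  haveI : Fact (1 < N) := ⟨by omega⟩
  set θ : ℝ := 2 * Real.pi * s / N with hθ
  set w : ℕ → ℂ := fun m => Complex.exp ((θ * m : ℝ) * Complex.I) with hw
  have hNz : (N : ℝ) ≠ 0 := Nat.cast_ne_zero.mpr (NeZero.ne N)
  have hv : ∀ j : ZMod N,
      Complex.exp (2 * Real.pi * Complex.I * s * j.val / N) = w j.val := by
    intro j
    simp only [hw]
    congr 1
    rw [hθ]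
    push_cast
    ring
  have hper : ∀ m, w (m + N) = w m := by
    intro m
    have hre : θ * ((m + N : ℕ) : ℝ) = θ * m + 2 * Real.pi * s := by
      rw [hθ]; push_cast; field_simp
    simp only [hw, hre, Complex.ofReal_add, add_mul, Complex.exp_add]
    have h1 : Complex.exp (((2 * Real.pi * s : ℝ) : ℂ) * Complex.I) = 1 := by
      rw [show ((2 * Real.pi * s : ℝ) : ℂ) * Complex.I
          = (s : ℂ) * (2 * Real.pi * Complex.I) by push_cast; ring]
      exact Complex.exp_nat_mul_two_pi_mul_I s
    rw [h1, mul_one]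
  have hmul : ∀ q m, w (m + N * q) = w m := by
    intro q
    induction q with
    | zero => simp
    | succ q ih =>
      intro m
      have hq : m + N * (q + 1) = (m + N * q) + N := by ring
      rw [hq, hper, ih]
  have hmod : ∀ m, w (m % N) = w m := by
    intro m
    conv_rhs => rw [← Nat.mod_add_div m N]
    rw [hmul]
  set e : ℂ := Complex.exp ((θ : ℝ) * Complex.I) with he
  have hene : e ≠ 0 := Complex.exp_ne_zero _
  have hstep : ∀ j : ZMod N, w ((j + 1).val) = w j.val * e := by
    intro j
    rw [ZMod.val_add, ZMod.val_one, hmod]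
    simp only [hw, he]
    rw [← Complex.exp_add]
    congr 1
    push_cast
    ring
  have hplus := hstep i
  have hminus : w ((i - 1).val) = w i.val * e⁻¹ := by
    have h2 := hstep (i - 1)
    rw [sub_add_cancel] at h2
    field_simp [h2]
    exact h2.symm
  rw [hv, hv, hv, hplus, hminus]
  have hee : e + e⁻¹ = 2 * (Real.cos θ : ℂ) := by
    rw [he, ← Complex.exp_neg,
      show -(((θ : ℝ) : ℂ) * Complex.I) = ((-θ : ℝ) : ℂ) * Complex.I by push_cast; ring,
      Complex.exp_mul_I, Complex.exp_mul_I, Complex.ofReal_cos, Complex.ofReal_neg,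
      Complex.cos_neg, Complex.sin_neg]
    ring
  calc w i.val * e + w i.val * e⁻¹ = (e + e⁻¹) * w i.val := by ring
  _ = 2 * (Real.cos θ : ℂ) * w i.val := by rw [hee]

lemma gHill_deriv_neg {b : ℝ} (hb : 0 < b) {h : ℕ} (hh : 1 ≤ h) {x : ℝ} (hx : 0 < x) :
    deriv (gHill b h) x < 0 := by
  have hu : HasDerivAt (fun y : ℝ => 1 + b * y ^ h) (b * (h * x ^ (h - 1))) x := by
    simpa using ((hasDerivAt_pow h x).const_mul b).const_add 1
  have hu0 : (1 : ℝ) + b * x ^ h ≠ 0 := by positivity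
  have hg : HasDerivAt (gHill b h)
      ((0 * (1 + b * x ^ h) - 1 * (b * (h * x ^ (h - 1)))) / ((1 + b * x ^ h) ^ 2)) x := by
    unfold gHill
    simpa [one_div, Pi.div_def] using (hasDerivAt_const x (1 : ℝ)).div hu hu0
  rw [hg.deriv]
  have hh' : (0 : ℝ) < (h : ℝ) := by exact_mod_cast hh
  have hnum : (0 : ℝ) < b * (h * x ^ (h - 1)) := by positivity
  apply div_neg_of_neg_of_pos
  · nlinarith
  · positivity

/-- On a one-dimensional periodic lattice of `N` cells, the Fourier vectors
`v_s(j) = exp(2πi·s·j/N)` are eigenvectors of the linearisation `J` around the homogeneous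
state `x̄₀`, with eigenvalues `λ_s = g′(x̄₀)f(x̄₀)·cos(2πs/N) + g(x̄₀)f′(x̄₀) − 1`; moreover,
for even `N`, `J` has a positive real eigenvalue iff
`f(x̄₀)g′(x̄₀) − f′(x̄₀)g(x̄₀) < −1`. -/
theorem circulant_jacobian_spectrum
    (a b : ℝ) (ha : 0 < a) (hb : 0 < b) (k h : ℕ) (hk : 1 ≤ k) (hh : 1 ≤ h)
    (x0 : ℝ) (hx0 : x0 ∈ Set.Ioo (0 : ℝ) 1)
    (hfix : fHill a k x0 * gHill b h x0 = x0)
    (N : ℕ) [NeZero N] (hN : 2 ≤ N) :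
    (∀ s : ℕ, s < N →
      (circJ N ((gHill b h x0 * deriv (fHill a k) x0 - 1 : ℝ) : ℂ)
          ((deriv (gHill b h) x0 * fHill a k x0 / 2 : ℝ) : ℂ)).mulVec
        (fun j : ZMod N => Complex.exp (2 * Real.pi * Complex.I * s * j.val / N)) =
      ((deriv (gHill b h) x0 * fHill a k x0 * Real.cos (2 * Real.pi * s / N)
          + gHill b h x0 * deriv (fHill a k) x0 - 1 : ℝ) : ℂ) •
        fun j : ZMod N => Complex.exp (2 * Real.pi * Complex.I * s * j.val / N)) ∧
    (Even N →
      ((∃ t : ℝ, 0 < t ∧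
          (Matrix.charpoly (circJ N ((gHill b h x0 * deriv (fHill a k) x0 - 1 : ℝ) : ℂ)
            ((deriv (gHill b h) x0 * fHill a k x0 / 2 : ℝ) : ℂ))).IsRoot (t : ℂ)) ↔
        fHill a k x0 * deriv (gHill b h) x0 - deriv (fHill a k) x0 * gHill b h x0 < -1)) := by
  obtain ⟨hx0pos, hx0lt⟩ := hx0
  set F := fHill a k x0 with hF
  set G := gHill b h x0 with hG
  set F' := deriv (fHill a k) x0 with hF'
  set G' := deriv (gHill b h) x0 with hG'
  have hFpos : 0 < F := by
    rw [hF, fHill]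
    positivity
  have hG'neg : G' < 0 := gHill_deriv_neg hb hh hx0pos
  have part1 : ∀ s : ℕ, s < N →
      (circJ N ((G * F' - 1 : ℝ) : ℂ) ((G' * F / 2 : ℝ) : ℂ)).mulVec
        (fun j : ZMod N => Complex.exp (2 * Real.pi * Complex.I * s * j.val / N)) =
      ((G' * F * Real.cos (2 * Real.pi * s / N) + G * F' - 1 : ℝ) : ℂ) •
        fun j : ZMod N => Complex.exp (2 * Real.pi * Complex.I * s * j.val / N) := by
    intro s _hs
    funext i
    rw [Pi.smul_apply, smul_eq_mul, circJ_mulVec]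
    have hnb := fourier_neighbor N hN s i
    set v : ZMod N → ℂ :=
      fun j : ZMod N => Complex.exp (2 * Real.pi * Complex.I * s * j.val / N) with hvdef
    have : ((G' * F / 2 : ℝ) : ℂ) * v (i + 1) + ((G' * F / 2 : ℝ) : ℂ) * v (i - 1)
        = ((G' * F / 2 : ℝ) : ℂ) * (v (i + 1) + v (i - 1)) := by ring
    calc ((G * F' - 1 : ℝ) : ℂ) * v i + ((G' * F / 2 : ℝ) : ℂ) * v (i + 1)
          + ((G' * F / 2 : ℝ) : ℂ) * v (i - 1)
        = ((G * F' - 1 : ℝ) : ℂ) * v i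
          + ((G' * F / 2 : ℝ) : ℂ) * (v (i + 1) + v (i - 1)) := by ring
      _ = ((G * F' - 1 : ℝ) : ℂ) * v i
          + ((G' * F / 2 : ℝ) : ℂ)
            * (2 * (Real.cos (2 * Real.pi * s / N) : ℂ) * v i) := by rw [hnb]
      _ = ((G' * F * Real.cos (2 * Real.pi * s / N) + G * F' - 1 : ℝ) : ℂ) * v i := by
          push_cast
          ring
  refine ⟨part1, fun hNeven => ?_⟩
  constructor
  · rintro ⟨t, ht, hroot⟩
    obtain ⟨v, hv0, hv⟩ := (myIsRoot_charpoly_iff _ _).mp hroot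
    obtain ⟨i, -, hi⟩ := Finset.exists_max_image Finset.univ (fun j => ‖v j‖)
      ⟨0, Finset.mem_univ 0⟩
    have hvi : v i ≠ 0 := by
      intro h0
      apply hv0
      funext j
      have hj := hi j (Finset.mem_univ j)
      rw [h0, norm_zero] at hj
      exact norm_le_zero_iff.mp hj
    have heq := congrFun hv i
    rw [circJ_mulVec, Pi.smul_apply, smul_eq_mul] at heq
    have key : ((t : ℝ) - (G * F' - 1 : ℝ) : ℂ) * v i
        = ((G' * F / 2 : ℝ) : ℂ) * (v (i + 1) + v (i - 1)) := by
      push_cast at heq ⊢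
      linear_combination -heq
    have hnorm : ‖((t : ℝ) - (G * F' - 1 : ℝ) : ℂ)‖ * ‖v i‖
        ≤ ‖((G' * F / 2 : ℝ) : ℂ)‖ * (2 * ‖v i‖) := by
      rw [← norm_mul, key, norm_mul]
      have h1 : ‖v (i + 1) + v (i - 1)‖ ≤ 2 * ‖v i‖ := by
        calc ‖v (i + 1) + v (i - 1)‖ ≤ ‖v (i + 1)‖ + ‖v (i - 1)‖ := norm_add_le _ _
        _ ≤ 2 * ‖v i‖ := by
            have := hi (i + 1) (Finset.mem_univ _)
            have := hi (i - 1) (Finset.mem_univ _)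
            linarith
      exact mul_le_mul_of_nonneg_left h1 (norm_nonneg _)
    have hvin : 0 < ‖v i‖ := norm_pos_iff.mpr hvi
    have hle : ‖((t : ℝ) - (G * F' - 1 : ℝ) : ℂ)‖ ≤ 2 * ‖((G' * F / 2 : ℝ) : ℂ)‖ := by
      have := hnorm
      nlinarith [norm_nonneg ((G' * F / 2 : ℝ) : ℂ)]
    have h2 : ‖((t : ℝ) - (G * F' - 1 : ℝ) : ℂ)‖ = |t - (G * F' - 1)| := by
      rw [show ((t : ℝ) - (G * F' - 1 : ℝ) : ℂ) = ((t - (G * F' - 1) : ℝ) : ℂ) by push_cast; ring,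
        Complex.norm_real]
      rfl
    have h3 : ‖((G' * F / 2 : ℝ) : ℂ)‖ = -(G' * F / 2) := by
      rw [Complex.norm_real, Real.norm_eq_abs, abs_of_nonpos]
      nlinarith
    rw [h2, h3] at hle
    have h4 : t - (G * F' - 1) ≤ |t - (G * F' - 1)| := le_abs_self _
    have h5 : F * G' = G' * F := mul_comm _ _
    have h6 : F' * G = G * F' := mul_comm _ _
    linarith
  · intro hlt
    obtain ⟨m, hm⟩ := hNeven
    have hm1 : 1 ≤ m := by omega
    set s : ℕ := N / 2 with hs
    have hsm : s = m := by omega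
    have hsN : s < N := by omega
    have hcos : Real.cos (2 * Real.pi * s / N) = -1 := by
      have hNne : (N : ℝ) ≠ 0 := Nat.cast_ne_zero.mpr (by omega)
      have harg : 2 * Real.pi * s / N = Real.pi := by
        rw [hsm, hm]
        have hmne : (m : ℝ) ≠ 0 := Nat.cast_ne_zero.mpr (by omega)
        push_cast
        field_simp
        ring
      rw [harg, Real.cos_pi]
    refine ⟨G' * F * Real.cos (2 * Real.pi * s / N) + G * F' - 1, ?_, ?_⟩
    · rw [hcos]
      have h5 : F * G' = G' * F := mul_comm _ _
      have h6 : F' * G = G * F' := mul_comm _ _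
      linarith
    · rw [myIsRoot_charpoly_iff]
      refine ⟨fun j : ZMod N => Complex.exp (2 * Real.pi * Complex.I * s * j.val / N),
        ?_, part1 s hsN⟩
      intro h0
      have := congrFun h0 0
      simp [ZMod.val_zero] at this
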